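/- Suppose x₁,…,xₙ : ℝ → ℝ² are differentiable and solve the point vortex ODE on an interval I, with x_i(t) ≠ x_j(t) for i ≠ j on I. Then the quantity Ĩ(t) = Σ_{i<j} m_i m_j |x_i(t) - x_j(t)|² is constant on I. -/

import Mathlib

open scoped RealInnerProductSpace

noncomputable def perp (z : EuclideanSpace ℝ (Fin 2)) : EuclideanSpace ℝ (Fin 2) :=
  WithLp.toLp 2 (fun i : Fin 2 => if i = 0 then -(z 1) else z 0)

noncomputable def K (x y : EuclideanSpace ℝ (Fin 2)) : EuclideanSpace ℝ (Fin 2) :=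
  (‖x - y‖ ^ 2)⁻¹ • perp (x - y)

lemma inner_perp_self (z : EuclideanSpace ℝ (Fin 2)) : ⟪z, perp z⟫ = 0 := by
  simp only [PiLp.inner_apply, RCLike.inner_apply, starRingEnd_apply, star_trivial,
    Fin.sum_univ_two, perp]
  norm_num
  ring

lemma perp_neg (z : EuclideanSpace ℝ (Fin 2)) : perp (-z) = -perp z := by
  ext i
  by_cases h : i = 0 <;> simp [perp, h]

lemma perp_zero : perp (0 : EuclideanSpace ℝ (Fin 2)) = 0 := by
  ext i
  by_cases h : i = 0 <;> simp [perp, h]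

lemma K_self (x : EuclideanSpace ℝ (Fin 2)) : K x x = 0 := by
  simp [K, perp_zero]

lemma K_skew (x y : EuclideanSpace ℝ (Fin 2)) : K y x = -K x y := by
  unfold K
  rw [show y - x = -(x - y) by abel, perp_neg, norm_neg, smul_neg]

lemma inner_sub_K (x y : EuclideanSpace ℝ (Fin 2)) : ⟪x - y, K x y⟫ = 0 := by
  rw [K, real_inner_smul_right, inner_perp_self, mul_zero]

variable {n : ℕ}

lemma skew_sum {α : Type*} [AddCommGroup α] [Module ℝ α] (g : Fin n → Fin n → α)
    (hg : ∀ i j, g i j + g j i = 0) : ∑ i : Fin n, ∑ j : Fin n, g i j = 0 := by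
  set S := ∑ i : Fin n, ∑ j : Fin n, g i j with hS
  have hcomm : ∑ i : Fin n, ∑ j : Fin n, g j i = S := Finset.sum_comm
  have h1 : ∑ i : Fin n, ∑ j : Fin n, (g i j + g j i) = S + S := by
    calc ∑ i : Fin n, ∑ j : Fin n, (g i j + g j i)
        = ∑ i : Fin n, ((∑ j : Fin n, g i j) + ∑ j : Fin n, g j i) :=
          Finset.sum_congr rfl fun i _ => Finset.sum_add_distrib
      _ = (∑ i : Fin n, ∑ j : Fin n, g i j) + ∑ i : Fin n, ∑ j : Fin n, g j i :=
          Finset.sum_add_distrib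
      _ = S + S := by rw [hcomm, hS]
  have h2 : S + S = 0 := by
    rw [← h1]
    simp [hg]
  have h3 : (2 : ℝ) • S = 0 := by rw [two_smul]; exact h2
  rcases smul_eq_zero.mp h3 with h | h
  · norm_num at h
  · exact h

/-- conservation of center of vorticity (pointwise algebraic identity) -/
lemma center_zero (m : Fin n → ℝ) (a : Fin n → EuclideanSpace ℝ (Fin 2)) :
    ∑ i : Fin n, m i • ∑ j : Fin n, m j • K (a i) (a j) = 0 := by
  have h1 : ∀ i : Fin n, m i • ∑ j : Fin n, m j • K (a i) (a j)
      = ∑ j : Fin n, (m i * m j) • K (a i) (a j) := by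
    intro i
    rw [Finset.smul_sum]
    exact Finset.sum_congr rfl fun j _ => by rw [smul_smul]
  rw [Finset.sum_congr rfl fun i _ => h1 i]
  apply skew_sum
  intro i j
  rw [K_skew (a i) (a j), smul_neg, mul_comm (m j) (m i), add_neg_cancel]

/-- conservation of moment of inertia (pointwise algebraic identity) -/
lemma moment_zero (m : Fin n → ℝ) (a : Fin n → EuclideanSpace ℝ (Fin 2)) :
    ∑ i : Fin n, m i * ⟪a i, ∑ j : Fin n, m j • K (a i) (a j)⟫ = 0 := by
  have h1 : ∀ i : Fin n, m i * ⟪a i, ∑ j : Fin n, m j • K (a i) (a j)⟫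
      = ∑ j : Fin n, (m i * m j) * ⟪a i, K (a i) (a j)⟫ := by
    intro i
    rw [inner_sum, Finset.mul_sum]
    exact Finset.sum_congr rfl fun j _ => by rw [real_inner_smul_right]; ring
  rw [Finset.sum_congr rfl fun i _ => h1 i]
  apply skew_sum
  intro i j
  rw [K_skew (a i) (a j), inner_neg_right, mul_comm (m j) (m i)]
  have h3 : ⟪a i, K (a i) (a j)⟫ - ⟪a j, K (a i) (a j)⟫ = 0 := by
    rw [← inner_sub_left, inner_sub_K]
  have h4 : ⟪a i, K (a i) (a j)⟫ = ⟪a j, K (a i) (a j)⟫ := by linarith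
  rw [h4]; ring

/-- the full off-diagonal sum vanishes -/
lemma full_sum_zero (m : Fin n → ℝ) (a : Fin n → EuclideanSpace ℝ (Fin 2)) :
    ∑ i : Fin n, ∑ j : Fin n,
      m i * m j * ⟪a i - a j, ∑ k : Fin n, m k • K (a i) (a k)⟫ = 0 := by
  set v : Fin n → EuclideanSpace ℝ (Fin 2) := fun i => ∑ k : Fin n, m k • K (a i) (a k) with hv
  set M : ℝ := ∑ j : Fin n, m j with hM
  set c : EuclideanSpace ℝ (Fin 2) := ∑ j : Fin n, m j • a j with hc
  have key : ∀ i, ∑ j : Fin n, m i * m j * ⟪a i - a j, v i⟫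
      = M * (m i * ⟪a i, v i⟫) - ⟪c, m i • v i⟫ := by
    intro i
    have h1 : ∑ j : Fin n, m i * m j * ⟪a i - a j, v i⟫
        = m i * ⟪∑ j : Fin n, m j • (a i - a j), v i⟫ := by
      rw [sum_inner, Finset.mul_sum]
      congr 1
      funext j
      rw [real_inner_smul_left]
      ring
    have h2 : ∑ j : Fin n, m j • (a i - a j) = M • a i - c := by
      simp only [smul_sub, Finset.sum_sub_distrib, hc, hM, ← Finset.sum_smul]
    rw [h1, h2, inner_sub_left, real_inner_smul_left, real_inner_smul_right]
    ring
  calc ∑ i : Fin n, ∑ j : Fin n, m i * m j * ⟪a i - a j, v i⟫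
      = ∑ i : Fin n, (M * (m i * ⟪a i, v i⟫) - ⟪c, m i • v i⟫) := by
        exact Finset.sum_congr rfl fun i _ => key i
    _ = M * (∑ i : Fin n, m i * ⟪a i, v i⟫) - ⟪c, ∑ i : Fin n, m i • v i⟫ := by
        rw [Finset.sum_sub_distrib, Finset.mul_sum, inner_sum]
    _ = 0 := by
        rw [moment_zero m a, center_zero m a, inner_zero_right, mul_zero, sub_zero]

/-- converting the sum over pairs i<j into a full double sum -/
lemma pair_sum_eq (f : Fin n × Fin n → ℝ) (hdiag : ∀ i, f (i, i) = 0) :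
    ∑ p ∈ Finset.univ.filter (fun p : Fin n × Fin n => p.1 < p.2), (f p + f p.swap)
      = ∑ i : Fin n, ∑ j : Fin n, f (i, j) := by
  have hfull : ∑ i : Fin n, ∑ j : Fin n, f (i, j) = ∑ p : Fin n × Fin n, f p := by
    rw [← Finset.sum_product']
    simp
  rw [hfull, Finset.sum_add_distrib]
  have hswap : ∑ p ∈ Finset.univ.filter (fun p : Fin n × Fin n => p.1 < p.2), f p.swap
      = ∑ p ∈ Finset.univ.filter (fun p : Fin n × Fin n => p.2 < p.1), f p := by
    apply Finset.sum_nbij' Prod.swap Prod.swap <;> simp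
  rw [hswap]
  have hsub : Finset.univ.filter (fun p : Fin n × Fin n => p.2 < p.1)
      ⊆ Finset.univ.filter (fun p : Fin n × Fin n => ¬ p.1 < p.2) := by
    intro p hp
    simp only [Finset.mem_filter, Finset.mem_univ, true_and] at hp ⊢
    exact asymm hp
  have h2 : ∑ p ∈ Finset.univ.filter (fun p : Fin n × Fin n => p.2 < p.1), f p
      = ∑ p ∈ Finset.univ.filter (fun p : Fin n × Fin n => ¬ p.1 < p.2), f p := by
    apply Finset.sum_subset hsub
    intro p hp1 hp2
    simp only [Finset.mem_filter, Finset.mem_univ, true_and, not_lt] at hp1 hp2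
    have heq : p.1 = p.2 := le_antisymm hp2 hp1
    rw [show p = (p.1, p.1) from Prod.ext rfl heq.symm]
    exact hdiag p.1
  rw [h2, Finset.sum_filter_add_sum_filter_not]

theorem Itilde_conserved (n : ℕ) (m : Fin n → ℝ) (hm : ∀ i, m i ≠ 0)
    (x : Fin n → ℝ → EuclideanSpace ℝ (Fin 2)) (I : Set ℝ) (hI : I.OrdConnected)
    (hsep : ∀ t ∈ I, ∀ i j, i ≠ j → x i t ≠ x j t)
    (hode : ∀ t ∈ I, ∀ i, HasDerivWithinAt (x i)
      (∑ j ∈ Finset.univ.erase i, m j • K (x i t) (x j t)) I t) :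
    ∀ s ∈ I, ∀ t ∈ I,
      ∑ p ∈ Finset.univ.filter (fun p : Fin n × Fin n => p.1 < p.2),
        m p.1 * m p.2 * ‖x p.1 s - x p.2 s‖ ^ 2
      = ∑ p ∈ Finset.univ.filter (fun p : Fin n × Fin n => p.1 < p.2),
        m p.1 * m p.2 * ‖x p.1 t - x p.2 t‖ ^ 2 := by
  classical
  set P := Finset.univ.filter (fun p : Fin n × Fin n => p.1 < p.2) with hP
  set F : ℝ → ℝ := fun τ => ∑ p ∈ P, m p.1 * m p.2 * ‖x p.1 τ - x p.2 τ‖ ^ 2 with hF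
  suffices key : ∀ t ∈ I, HasDerivWithinAt F 0 I t by
    intro s hs t ht
    have hd := Convex.norm_image_sub_le_of_norm_hasDerivWithin_le
      (f := F) (f' := fun _ => (0 : ℝ)) (C := 0)
      (fun u hu => key u hu) (fun u _ => by simp)
      (convex_iff_ordConnected.mpr hI) hs ht
    rw [zero_mul] at hd
    have : F t = F s := by
      have := norm_sub_eq_zero_iff.mp (le_antisymm hd (norm_nonneg _))
      exact this
    exact this.symm
  intro t ht
  set a : Fin n → EuclideanSpace ℝ (Fin 2) := fun i => x i t with ha
  set v : Fin n → EuclideanSpace ℝ (Fin 2) :=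
    fun i => ∑ k : Fin n, m k • K (a i) (a k) with hv
  have hx' : ∀ i, HasDerivWithinAt (x i) (v i) I t := by
    intro i
    have h0 := hode t ht i
    have : ∑ j ∈ Finset.univ.erase i, m j • K (x i t) (x j t) = v i := by
      rw [hv]
      apply Finset.sum_erase
      rw [K_self, smul_zero]
    rwa [this] at h0
  have hterm : ∀ p ∈ P, HasDerivWithinAt
      (fun τ => m p.1 * m p.2 * ‖x p.1 τ - x p.2 τ‖ ^ 2)
      (m p.1 * m p.2 * (2 * ⟪a p.1 - a p.2, v p.1 - v p.2⟫)) I t := by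
    intro p _
    have h1 : HasDerivWithinAt (fun τ => x p.1 τ - x p.2 τ) (v p.1 - v p.2) I t :=
      (hx' p.1).sub (hx' p.2)
    have h2 := h1.inner ℝ h1
    have h3 : (fun τ => ‖x p.1 τ - x p.2 τ‖ ^ 2)
        = fun τ => ⟪x p.1 τ - x p.2 τ, x p.1 τ - x p.2 τ⟫ := by
      funext τ
      rw [real_inner_self_eq_norm_sq]
    have h4 : HasDerivWithinAt (fun τ => ‖x p.1 τ - x p.2 τ‖ ^ 2)
        (2 * ⟪a p.1 - a p.2, v p.1 - v p.2⟫) I t := by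
      rw [h3]
      refine HasDerivWithinAt.congr_deriv h2 ?_
      rw [real_inner_comm (v p.1 - v p.2)]
      ring
    exact h4.const_mul _
  have hFd : HasDerivWithinAt F
      (∑ p ∈ P, m p.1 * m p.2 * (2 * ⟪a p.1 - a p.2, v p.1 - v p.2⟫)) I t :=
    HasDerivWithinAt.fun_sum hterm
  have hzero : ∑ p ∈ P, m p.1 * m p.2 * (2 * ⟪a p.1 - a p.2, v p.1 - v p.2⟫) = 0 := by
    set h : Fin n × Fin n → ℝ := fun p => m p.1 * m p.2 * ⟪a p.1 - a p.2, v p.1⟫ with hh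
    have hexp : ∀ p : Fin n × Fin n,
        m p.1 * m p.2 * (2 * ⟪a p.1 - a p.2, v p.1 - v p.2⟫) = 2 * (h p + h p.swap) := by
      intro p
      simp only [hh, Prod.fst_swap, Prod.snd_swap, inner_sub_left, inner_sub_right]
      ring
    calc ∑ p ∈ P, m p.1 * m p.2 * (2 * ⟪a p.1 - a p.2, v p.1 - v p.2⟫)
        = ∑ p ∈ P, 2 * (h p + h p.swap) := Finset.sum_congr rfl fun p _ => hexp p
      _ = 2 * ∑ p ∈ P, (h p + h p.swap) := by rw [Finset.mul_sum]
      _ = 2 * ∑ i : Fin n, ∑ j : Fin n, h (i, j) := by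
          rw [pair_sum_eq h (fun i => by simp [hh])]
      _ = 0 := by
          rw [show (∑ i : Fin n, ∑ j : Fin n, h (i, j)) = 0 from full_sum_zero m a, mul_zero]
  rw [← hzero]
  exact hFd
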